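/- Let a, b, f be real numbers with a > 0, b > 0, f > 0 and f ≥ a + b, and let n be a nonnegative integer. Then the (n+1)-st partial sum of the Gauss hypergeometric series ₂F₁(a,b;f;1) satisfies ∑_{k=0}^{n} (a)_k (b)_k / ((f)_k · k!) = [Γ(a+n+1) Γ(b+n+1) / (Γ(n+1) Γ(a+b+n+1))] · ∑_{m=0}^{∞} (a)_m (b)_m (f+n)_m / ((f)_m (a+b+n+1)_m · m!). -/

import Mathlib

open scoped Nat
open Filter Topology Asymptotics

/-- Pochhammer symbol (rising factorial) `(x)_k` for a real number `x`. -/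
noncomputable def poch (x : ℝ) (k : ℕ) : ℝ := (ascPochhammer ℝ k).eval x

lemma poch_zero (x : ℝ) : poch x 0 = 1 := by simp [poch]

lemma poch_succ (x : ℝ) (k : ℕ) : poch x (k + 1) = poch x k * (x + k) :=
  ascPochhammer_succ_eval k x

lemma poch_pos {x : ℝ} (hx : 0 < x) (k : ℕ) : 0 < poch x k := ascPochhammer_pos k x hx

lemma poch_shift (x : ℝ) (k : ℕ) : x * poch (x + 1) k = poch x k * (x + k) := by
  have h1 : poch x (k + 1) = x * poch (x + 1) k := by
    simp [poch, ascPochhammer_succ_left, Polynomial.eval_comp]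
  rw [← h1, poch_succ]

lemma poch_eq_prod (x : ℝ) (k : ℕ) : poch x k = ∏ i ∈ Finset.range k, (x + i) := by
  induction k with
  | zero => simp [poch]
  | succ k ih => rw [poch_succ, Finset.prod_range_succ, ih]

lemma poch_gamma {x : ℝ} (hx : 0 < x) (k : ℕ) :
    Real.Gamma (x + k) = poch x k * Real.Gamma x := by
  induction k with
  | zero => simp [poch_zero]
  | succ k ih =>
      have h : x + (k + 1 : ℕ) = (x + k) + 1 := by push_cast; ring
      rw [h, Real.Gamma_add_one (by positivity), ih, poch_succ]; ring

lemma pf_tendsto {x : ℝ} (hx : 0 < x) :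
    Tendsto (fun M : ℕ => poch x M * (x + M) / ((M : ℝ) ^ x * (M)!)) atTop
      (𝓝 (Real.Gamma x)⁻¹) := by
  have h := (Real.GammaSeq_tendsto_Gamma x).inv₀ (Real.Gamma_pos_of_pos hx).ne'
  refine h.congr fun M => ?_
  rw [Real.GammaSeq, inv_div]
  congr 1
  rw [← poch_eq_prod, poch_succ]
lemma ratio_tendsto (c d : ℝ) :
    Tendsto (fun M : ℕ => ((M : ℝ) + c) / ((M : ℝ) + d)) atTop (𝓝 1) := by
  have h1 : Tendsto (fun x : ℝ => 1 + (c - d) / (x + d)) atTop (𝓝 1) := by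
    have h2 : Tendsto (fun x : ℝ => (x + d)⁻¹) atTop (𝓝 0) :=
      tendsto_inv_atTop_zero.comp (tendsto_atTop_add_const_right _ d tendsto_id)
    have := (h2.const_mul (c - d)).const_add 1
    simpa [div_eq_mul_inv, add_zero] using this
  have h3 : Tendsto (fun x : ℝ => (x + c) / (x + d)) atTop (𝓝 1) := by
    refine h1.congr' ?_
    filter_upwards [eventually_gt_atTop (|d| + 1)] with x hx
    have hxd : x + d ≠ 0 := by
      have : -d ≤ |d| := neg_le_abs d
      nlinarith [abs_nonneg d]
    field_simp
    ring
  exact h3.comp tendsto_natCast_atTop_atTop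

lemma limit1 {p q r s t : ℝ} (hp : 0 < p) (hq : 0 < q) (hr : 0 < r) (hs : 0 < s)
    (ht : 0 < t) (hsum : s + t = p + q + r + 1) (e : ℝ) :
    Tendsto (fun M : ℕ => poch p M * poch q M * poch r M /
        (poch s M * poch t M * (M)!) * ((M : ℝ) * ((M : ℝ) + e))) atTop
      (𝓝 (Real.Gamma s * Real.Gamma t / (Real.Gamma p * Real.Gamma q * Real.Gamma r))) := by
  have hgp := Real.Gamma_pos_of_pos hp
  have hgq := Real.Gamma_pos_of_pos hq
  have hgr := Real.Gamma_pos_of_pos hr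
  have hgs := Real.Gamma_pos_of_pos hs
  have hgt := Real.Gamma_pos_of_pos ht
  have key := ((((pf_tendsto hp).mul (pf_tendsto hq)).mul (pf_tendsto hr)).div
      ((pf_tendsto hs).mul (pf_tendsto ht)) (by positivity)).mul
    (((ratio_tendsto e p).mul (ratio_tendsto s q)).mul (ratio_tendsto t r))
  have hval : (Real.Gamma p)⁻¹ * (Real.Gamma q)⁻¹ * (Real.Gamma r)⁻¹ /
      ((Real.Gamma s)⁻¹ * (Real.Gamma t)⁻¹) * (1 * 1 * 1) =
      Real.Gamma s * Real.Gamma t / (Real.Gamma p * Real.Gamma q * Real.Gamma r) := by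
    field_simp
  rw [hval] at key
  refine key.congr' ?_
  filter_upwards [eventually_ge_atTop 1] with M hM
  have hM0 : (0 : ℝ) < M := by exact_mod_cast hM
  have hMf : (0 : ℝ) < ((M)! : ℝ) := by exact_mod_cast M.factorial_pos
  have hpow : (M : ℝ) ^ p * (M : ℝ) ^ q * (M : ℝ) ^ r * (M : ℝ) ^ (1 : ℝ) =
      (M : ℝ) ^ (p + q + r + 1) := by
    rw [← Real.rpow_add hM0, ← Real.rpow_add hM0, ← Real.rpow_add hM0]
  have h1 : (M : ℝ) ^ t = (M : ℝ) ^ p * (M : ℝ) ^ q * (M : ℝ) ^ r * (M : ℝ) / (M : ℝ) ^ s := by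
    rw [eq_div_iff (Real.rpow_pos_of_pos hM0 s).ne', mul_comm ((M:ℝ)^t),
      ← Real.rpow_add hM0, hsum, ← hpow, Real.rpow_one]
  simp only [Pi.div_apply]
  rw [h1]
  have h2 : (0 : ℝ) < (M : ℝ) ^ p := Real.rpow_pos_of_pos hM0 p
  have h3 : (0 : ℝ) < (M : ℝ) ^ q := Real.rpow_pos_of_pos hM0 q
  have h4 : (0 : ℝ) < (M : ℝ) ^ r := Real.rpow_pos_of_pos hM0 r
  have h5 : (0 : ℝ) < (M : ℝ) ^ s := Real.rpow_pos_of_pos hM0 s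
  have e1 := (poch_pos hp M).ne'
  have e2 := (poch_pos hq M).ne'
  have e3 := (poch_pos hr M).ne'
  have e4 := (poch_pos hs M).ne'
  have e5 := (poch_pos ht M).ne'
  have e6 : (M : ℝ) + p ≠ 0 := by positivity
  have e7 : (M : ℝ) + q ≠ 0 := by positivity
  have e8 : (M : ℝ) + r ≠ 0 := by positivity
  have e9 : (M : ℝ) + s ≠ 0 := by positivity
  have e10 : (M : ℝ) + t ≠ 0 := by positivity
  field_simp
  ring

lemma limit2 {p q : ℝ} (hp : 0 < p) (hq : 0 < q) :
    Tendsto (fun M : ℕ => poch p M * poch q M / (poch (p + q) M * (M)!) * (M : ℝ)) atTop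
      (𝓝 (Real.Gamma (p + q) / (Real.Gamma p * Real.Gamma q))) := by
  have hgp := Real.Gamma_pos_of_pos hp
  have hgq := Real.Gamma_pos_of_pos hq
  have hgs := Real.Gamma_pos_of_pos (by positivity : (0:ℝ) < p + q)
  have key := (((pf_tendsto hp).mul (pf_tendsto hq)).div
      (pf_tendsto (by positivity : (0:ℝ) < p + q)) (by positivity)).mul
    ((ratio_tendsto (p + q) p).mul (ratio_tendsto 0 q))
  have hval : (Real.Gamma p)⁻¹ * (Real.Gamma q)⁻¹ / (Real.Gamma (p + q))⁻¹ * (1 * 1) =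
      Real.Gamma (p + q) / (Real.Gamma p * Real.Gamma q) := by field_simp
  rw [hval] at key
  refine key.congr' ?_
  filter_upwards [eventually_ge_atTop 1] with M hM
  have hM0 : (0 : ℝ) < M := by exact_mod_cast hM
  have hMf : (0 : ℝ) < ((M)! : ℝ) := by exact_mod_cast M.factorial_pos
  have h1 : (M : ℝ) ^ (p + q) = (M : ℝ) ^ p * (M : ℝ) ^ q := Real.rpow_add hM0 p q
  simp only [Pi.div_apply]
  rw [h1]
  have h2 : (0 : ℝ) < (M : ℝ) ^ p := Real.rpow_pos_of_pos hM0 p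
  have h3 : (0 : ℝ) < (M : ℝ) ^ q := Real.rpow_pos_of_pos hM0 q
  have e1 := (poch_pos hp M).ne'
  have e2 := (poch_pos hq M).ne'
  have e3 := (poch_pos (by positivity : (0:ℝ) < p + q) M).ne'
  have e6 : (M : ℝ) + p ≠ 0 := by positivity
  have e7 : (M : ℝ) + q ≠ 0 := by positivity
  field_simp
  ring

lemma summable_of_tendsto_sq {g : ℕ → ℝ} {e L : ℝ}
    (h : Tendsto (fun M : ℕ => g M * ((M : ℝ) * ((M : ℝ) + e))) atTop (𝓝 L)) :
    Summable g := by
  have hsum : Summable (fun M : ℕ => 1 / (M : ℝ) ^ 2) :=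
    Real.summable_one_div_nat_pow.mpr one_lt_two
  refine summable_of_isBigO_nat hsum ?_
  have h1 : (fun M : ℕ => g M * ((M : ℝ) * ((M : ℝ) + e))) =O[atTop] (fun _ => (1 : ℝ)) :=
    h.isBigO_one ℝ
  have h2 : (fun M : ℕ => ((M : ℝ) * ((M : ℝ) + e))⁻¹) =O[atTop] (fun M : ℕ => 1 / (M : ℝ) ^ 2) := by
    rw [isBigO_iff]
    refine ⟨2, ?_⟩
    filter_upwards [eventually_ge_atTop (⌈2 * |e| + 2⌉₊)] with M hM
    have hMr : 2 * |e| + 2 ≤ (M : ℝ) := le_trans (Nat.le_ceil _) (by exact_mod_cast hM)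
    have habs : -e ≤ |e| := neg_le_abs e
    have hM0 : (0 : ℝ) < M := by nlinarith [abs_nonneg e]
    have hMe : (M : ℝ) / 2 ≤ (M : ℝ) + e := by nlinarith [abs_nonneg e]
    have hpos : (0 : ℝ) < (M : ℝ) * ((M : ℝ) + e) := by nlinarith
    rw [Real.norm_eq_abs, Real.norm_eq_abs, abs_of_pos (inv_pos.mpr hpos), abs_of_pos (by positivity : (0:ℝ) < 1 / (M:ℝ)^2)]
    rw [inv_le_iff_one_le_mul₀ hpos]
    have : (M : ℝ) ^ 2 / 2 ≤ (M : ℝ) * ((M : ℝ) + e) := by nlinarith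
    calc (1 : ℝ) = 2 * (1 / (M:ℝ)^2) * ((M:ℝ)^2 / 2) := by field_simp
    _ ≤ 2 * (1 / (M:ℝ)^2) * ((M : ℝ) * ((M : ℝ) + e)) := by
        have : (0:ℝ) < 2 * (1 / (M:ℝ)^2) := by positivity
        nlinarith [this]
  have h3 : (fun M : ℕ => g M) =ᶠ[atTop]
      (fun M : ℕ => g M * ((M : ℝ) * ((M : ℝ) + e)) * ((M : ℝ) * ((M : ℝ) + e))⁻¹) := by
    filter_upwards [eventually_ge_atTop (⌈|e| + 1⌉₊)] with M hM
    have hMr : |e| + 1 ≤ (M : ℝ) := le_trans (Nat.le_ceil _) (by exact_mod_cast hM)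
    have habs : -e ≤ |e| := neg_le_abs e
    have hpos : (0 : ℝ) < (M : ℝ) * ((M : ℝ) + e) := by nlinarith [abs_nonneg e]
    field_simp
    rw [eq_div_iff hpos.ne']; ring
  calc (fun M : ℕ => g M) =ᶠ[atTop] _ := h3
  _ =O[atTop] (fun M : ℕ => (1 : ℝ) * (1 / (M : ℝ) ^ 2)) := h1.mul h2
  _ = (fun M : ℕ => 1 / (M : ℝ) ^ 2) := by funext M; ring

noncomputable def Tb (a b f : ℝ) (n m : ℕ) : ℝ :=
  poch a m * poch b m * poch (f + n) m / (poch f m * poch (a + b + n + 1) m * (m)!)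

section
variable {a b f : ℝ} (ha : 0 < a) (hb : 0 < b) (hf : 0 < f)

include ha hb hf

lemma Tb_succ (n M : ℕ) : Tb a b f n (M + 1) =
    Tb a b f n M * ((a + M) * (b + M) * (f + n + M)) /
      ((f + M) * (a + b + n + 1 + M) * (M + 1)) := by
  have e1 := (poch_pos ha M).ne'
  have e2 := (poch_pos hb M).ne'
  have e3 := (poch_pos hf M).ne'
  have e4 := (poch_pos (by positivity : (0:ℝ) < f + n) M).ne'
  have e5 := (poch_pos (by positivity : (0:ℝ) < a + b + n + 1) M).ne'
  have hMf : (0 : ℝ) < ((M)! : ℝ) := by exact_mod_cast M.factorial_pos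
  have e6 : (f : ℝ) + M ≠ 0 := by positivity
  have e7 : (a : ℝ) + b + n + 1 + M ≠ 0 := by positivity
  have e8 : ((M : ℝ) + 1) ≠ 0 := by positivity
  simp only [Tb, poch_succ, Nat.factorial_succ, Nat.cast_mul, Nat.cast_add, Nat.cast_one]
  field_simp

lemma Tb_shift (n m : ℕ) : Tb a b f (n + 1) m =
    Tb a b f n m * ((f + n + m) * (a + b + n + 1)) / ((f + n) * (a + b + n + 1 + m)) := by
  have hfn : (0:ℝ) < f + n := by positivity
  have hB : (0:ℝ) < a + b + n + 1 := by positivity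
  have e1 := (poch_pos ha m).ne'
  have e2 := (poch_pos hb m).ne'
  have e3 := (poch_pos hf m).ne'
  have e4 := (poch_pos hfn m).ne'
  have e5 := (poch_pos hB m).ne'
  have e4' := (poch_pos (by positivity : (0:ℝ) < f + n + 1) m).ne'
  have e5' := (poch_pos (by positivity : (0:ℝ) < a + b + n + 1 + 1) m).ne'
  have hMf : (0 : ℝ) < ((m)! : ℝ) := by exact_mod_cast m.factorial_pos
  have e6 : (f : ℝ) + n + m ≠ 0 := by positivity
  have e7 : (a : ℝ) + b + n + 1 + m ≠ 0 := by positivity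
  have h1 := poch_shift (f + n) m
  have h2 := poch_shift (a + b + n + 1) m
  have c1 : (f : ℝ) + (n + 1 : ℕ) = f + n + 1 := by push_cast; ring
  have c2 : (a : ℝ) + b + (n + 1 : ℕ) + 1 = a + b + n + 1 + 1 := by push_cast; ring
  simp only [Tb, c1, c2]
  rw [show poch (f + n + 1) m = poch (f + (n:ℝ)) m * (f + n + m) / (f + n) by
        field_simp; linear_combination h1,
      show poch (a + b + (n:ℝ) + 1 + 1) m = poch (a + b + (n:ℝ) + 1) m *
          (a + b + n + 1 + m) / (a + b + n + 1) by field_simp; linear_combination h2]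
  field_simp

lemma base_partial (M : ℕ) : ∑ m ∈ Finset.range M, Tb a b f 0 m =
    poch a M * poch b M / (poch (a + b) M * (M)!) * M * ((a + b) / (a * b)) := by
  induction M with
  | zero => simp
  | succ M ih =>
      rw [Finset.sum_range_succ, ih]
      have hab : (0:ℝ) < a + b := by positivity
      have e1 := (poch_pos ha M).ne'
      have e2 := (poch_pos hb M).ne'
      have e3 := (poch_pos hf M).ne'
      have e4 := (poch_pos hab M).ne'
      have e5 := (poch_pos (by positivity : (0:ℝ) < a + b + 1) M).ne'
      have hMf : (0 : ℝ) < ((M)! : ℝ) := by exact_mod_cast M.factorial_pos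
      have e6 : (a : ℝ) + b + M ≠ 0 := by positivity
      have h2 := poch_shift (a + b) M
      have c0 : Tb a b f 0 M = poch a M * poch b M / (poch (a + b + 1) M * (M)!) := by
        simp only [Tb, Nat.cast_zero, add_zero]
        field_simp
      rw [c0, poch_succ, poch_succ, poch_succ,
        show poch (a + b + 1) M = poch (a + b) M * (a + b + M) / (a + b) by
          field_simp; linear_combination h2]
      simp only [Nat.factorial_succ, Nat.cast_mul, Nat.cast_add, Nat.cast_one]
      field_simp
      ring

lemma step_partial (n M : ℕ) :
    ∑ m ∈ Finset.range M, ((a + n + 1) * (b + n + 1) / ((n + 1) * (a + b + n + 1)) *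
        Tb a b f (n + 1) m - Tb a b f n m) =
      Tb a b f n M * ((M : ℝ) * ((M : ℝ) + (f - 1))) / ((n + 1) * (f + n)) := by
  induction M with
  | zero => simp
  | succ M ih =>
      rw [Finset.sum_range_succ, ih, Tb_shift ha hb hf n M, Tb_succ ha hb hf n M]
      have hfn : (0:ℝ) < f + n := by positivity
      have hB : (0:ℝ) < a + b + n + 1 := by positivity
      have e6 : (f : ℝ) + M ≠ 0 := by positivity
      have e7 : (a : ℝ) + b + n + 1 + M ≠ 0 := by positivity
      have e8 : ((M : ℝ) + 1) ≠ 0 := by positivity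
      have e9 : ((n : ℝ) + 1) ≠ 0 := by positivity
      push_cast
      field_simp
      ring

end

section
variable {a b f : ℝ} (ha : 0 < a) (hb : 0 < b) (hf : 0 < f)
include ha hb hf

lemma Tb_limit (n : ℕ) :
    Tendsto (fun M : ℕ => Tb a b f n M * ((M : ℝ) * ((M : ℝ) + (f - 1)))) atTop
      (𝓝 (Real.Gamma f * Real.Gamma (a + b + n + 1) /
        (Real.Gamma a * Real.Gamma b * Real.Gamma (f + n)))) := by
  have := limit1 (p := a) (q := b) (r := f + (n:ℝ)) (s := f) (t := a + b + (n:ℝ) + 1)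
    ha hb (by positivity) hf (by positivity) (by ring) (f - 1)
  exact this.congr fun M => by simp only [Tb]

lemma Tb_summable (n : ℕ) : Summable (Tb a b f n) :=
  summable_of_tendsto_sq (Tb_limit ha hb hf n)

lemma main_lemma (n : ℕ) : ∑' m : ℕ, Tb a b f n m =
    Real.Gamma (n + 1) * Real.Gamma (a + b + n + 1) /
      (Real.Gamma (a + n + 1) * Real.Gamma (b + n + 1)) *
    ∑ k ∈ Finset.range (n + 1), poch a k * poch b k / (poch f k * (k)!) := by
  have hga := Real.Gamma_pos_of_pos ha
  have hgb := Real.Gamma_pos_of_pos hb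
  induction n with
  | zero =>
      have hS := Tb_summable ha hb hf 0
      have h1 : Tendsto (fun M : ℕ => ∑ m ∈ Finset.range M, Tb a b f 0 m) atTop
          (𝓝 (Real.Gamma (a + b) / (Real.Gamma a * Real.Gamma b) * ((a + b) / (a * b)))) := by
        have := (limit2 ha hb).mul_const ((a + b) / (a * b))
        refine this.congr fun M => ?_
        rw [base_partial ha hb hf M]
      have h2 := hS.hasSum.tendsto_sum_nat
      have h3 := tendsto_nhds_unique h2 h1
      rw [h3]
      have hgab := Real.Gamma_pos_of_pos (by positivity : (0:ℝ) < a + b)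
      simp only [Nat.cast_zero, zero_add, Finset.sum_range_one, poch_zero, Nat.factorial_zero,
        Nat.cast_one, add_zero]
      rw [Real.Gamma_one, Real.Gamma_add_one ha.ne', Real.Gamma_add_one hb.ne',
        Real.Gamma_add_one (by positivity : (a:ℝ) + b ≠ 0)]
      field_simp
  | succ n ih =>
      have hS1 := Tb_summable ha hb hf (n + 1)
      have hS0 := Tb_summable ha hb hf n
      set coef : ℝ := (a + n + 1) * (b + n + 1) / ((n + 1) * (a + b + n + 1)) with hcoef
      have hcoefpos : 0 < coef := by
        rw [hcoef]; positivity
      have hu : Summable (fun m => coef * Tb a b f (n + 1) m - Tb a b f n m) :=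
        (hS1.mul_left coef).sub hS0
      have htsum : ∑' m, (coef * Tb a b f (n + 1) m - Tb a b f n m) =
          coef * ∑' m, Tb a b f (n + 1) m - ∑' m, Tb a b f n m := by
        rw [Summable.tsum_sub (hS1.mul_left coef) hS0, tsum_mul_left]
      have h1 : Tendsto (fun M : ℕ => ∑ m ∈ Finset.range M,
          (coef * Tb a b f (n + 1) m - Tb a b f n m)) atTop
          (𝓝 (Real.Gamma f * Real.Gamma (a + b + n + 1) /
            (Real.Gamma a * Real.Gamma b * Real.Gamma (f + n)) / ((n + 1) * (f + n)))) := by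
        have := (Tb_limit ha hb hf n).div_const ((n + 1) * (f + n))
        refine this.congr fun M => ?_
        rw [step_partial ha hb hf n M]
      have h2 := hu.hasSum.tendsto_sum_nat
      have h3 := tendsto_nhds_unique h2 h1
      rw [htsum] at h3
      -- solve for the (n+1) tsum
      have hfn : (0:ℝ) < f + n := by positivity
      have hB : (0:ℝ) < a + b + n + 1 := by positivity
      have hn1 : (0:ℝ) < (n:ℝ) + 1 := by positivity
      have hgf := Real.Gamma_pos_of_pos hf
      have hgB := Real.Gamma_pos_of_pos hB
      have hgfn := Real.Gamma_pos_of_pos hfn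
      have hT1 : ∑' m, Tb a b f (n + 1) m =
          (∑' m, Tb a b f n m + Real.Gamma f * Real.Gamma (a + b + n + 1) /
            (Real.Gamma a * Real.Gamma b * Real.Gamma (f + n)) / ((n + 1) * (f + n))) / coef := by
        rw [eq_div_iff hcoefpos.ne']
        linarith [h3]
      rw [hT1, ih]
      conv_rhs => rw [Finset.sum_range_succ]
      -- now pure Gamma algebra
      have c1 : ((n + 1 : ℕ) : ℝ) = (n : ℝ) + 1 := by push_cast; ring
      rw [c1]
      have g1 : Real.Gamma ((n : ℝ) + 1 + 1) = ((n : ℝ) + 1) * Real.Gamma ((n : ℝ) + 1) :=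
        Real.Gamma_add_one (by positivity)
      have g2 : Real.Gamma (a + ((n : ℝ) + 1) + 1) = (a + n + 1) * Real.Gamma (a + n + 1) := by
        rw [show a + ((n : ℝ) + 1) + 1 = (a + n + 1) + 1 by ring,
          Real.Gamma_add_one (by positivity)]
      have g3 : Real.Gamma (b + ((n : ℝ) + 1) + 1) = (b + n + 1) * Real.Gamma (b + n + 1) := by
        rw [show b + ((n : ℝ) + 1) + 1 = (b + n + 1) + 1 by ring,
          Real.Gamma_add_one (by positivity)]
      have g4 : Real.Gamma (a + b + ((n : ℝ) + 1) + 1) =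
          (a + b + n + 1) * Real.Gamma (a + b + n + 1) := by
        rw [show a + b + ((n : ℝ) + 1) + 1 = (a + b + n + 1) + 1 by ring,
          Real.Gamma_add_one (by positivity)]
      rw [g1, g2, g3, g4]
      -- express Gammas via poch
      have p1 : Real.Gamma (a + (n : ℝ) + 1) = poch a (n + 1) * Real.Gamma a := by
        rw [show a + (n : ℝ) + 1 = a + ((n + 1 : ℕ) : ℝ) by push_cast; ring, poch_gamma ha]
      have p2 : Real.Gamma (b + (n : ℝ) + 1) = poch b (n + 1) * Real.Gamma b := by
        rw [show b + (n : ℝ) + 1 = b + ((n + 1 : ℕ) : ℝ) by push_cast; ring, poch_gamma hb]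
      have p3 : Real.Gamma (f + (n : ℝ)) = poch f n * Real.Gamma f := by
        rw [← poch_gamma hf]
      have p4 : Real.Gamma ((n : ℝ) + 1) = (n)! := by
        rw [show (n : ℝ) + 1 = ((n : ℕ) : ℝ) + 1 by push_cast; ring,
          Real.Gamma_nat_eq_factorial]
      have p5 : poch f (n + 1) = poch f n * (f + n) := poch_succ f n
      have p6 : poch a (n + 1) ≠ 0 := (poch_pos ha (n + 1)).ne'
      have p7 : poch b (n + 1) ≠ 0 := (poch_pos hb (n + 1)).ne'
      have p8 : poch f n ≠ 0 := (poch_pos hf n).ne'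
      have p9 : poch f (n + 1) ≠ 0 := (poch_pos hf (n + 1)).ne'
      have p10 : ((n + 1 : ℕ)! : ℝ) = ((n : ℝ) + 1) * (n)! := by
        rw [Nat.factorial_succ]; push_cast; ring
      have hnf : (0 : ℝ) < ((n)! : ℝ) := by exact_mod_cast n.factorial_pos
      rw [hcoef, p1, p2, p3, p4, p10]
      rw [p5] at p9 ⊢
      field_simp
end

/-- Bailey's formula: the `(n+1)`-st partial sum of the Gauss series `₂F₁(a,b;f;1)`
equals a gamma-factor times the Clausen series `₃F₂(a,b,f+n; f,a+b+n+1; 1)`. -/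
theorem truncated_gauss_eq_clausen (a b f : ℝ) (ha : 0 < a) (hb : 0 < b) (hf : 0 < f)
    (hab : a + b ≤ f) (n : ℕ) :
    ∑ k ∈ Finset.range (n + 1), poch a k * poch b k / (poch f k * (k)!) =
      Real.Gamma (a + n + 1) * Real.Gamma (b + n + 1) /
          (Real.Gamma (n + 1) * Real.Gamma (a + b + n + 1)) *
        ∑' m : ℕ, poch a m * poch b m * poch (f + n) m /
          (poch f m * poch (a + b + n + 1) m * (m)!) := by
  have key : (∑' m : ℕ, poch a m * poch b m * poch (f + n) m /
      (poch f m * poch (a + b + n + 1) m * (m)!)) =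
      Real.Gamma (n + 1) * Real.Gamma (a + b + n + 1) /
        (Real.Gamma (a + n + 1) * Real.Gamma (b + n + 1)) *
      ∑ k ∈ Finset.range (n + 1), poch a k * poch b k / (poch f k * (k)!) :=
    main_lemma ha hb hf n
  rw [key, ← mul_assoc]
  have h1 := Real.Gamma_pos_of_pos (show (0:ℝ) < a + n + 1 by positivity)
  have h2 := Real.Gamma_pos_of_pos (show (0:ℝ) < b + n + 1 by positivity)
  have h3 := Real.Gamma_pos_of_pos (show (0:ℝ) < (n:ℝ) + 1 by positivity)
  have h4 := Real.Gamma_pos_of_pos (show (0:ℝ) < a + b + n + 1 by positivity)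
  rw [show Real.Gamma (a + n + 1) * Real.Gamma (b + n + 1) /
      (Real.Gamma (n + 1) * Real.Gamma (a + b + n + 1)) *
      (Real.Gamma (n + 1) * Real.Gamma (a + b + n + 1) /
        (Real.Gamma (a + n + 1) * Real.Gamma (b + n + 1))) = 1 by field_simp, one_mul]
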